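/- Let G be a group with a factorial automatic structure L₁ ⊆ A* for π₁ : A* → G and an automatic structure L₂ ⊆ B* for π₂ : B* → G, and let φ be an endomorphism of G such that the FT-BRP holds for (φ, L₁, L₂). Then the BRP holds for (φ, L₁, L₂). -/

import Mathlib

open scoped NNReal

namespace Auto

/-- The generating set `Aπ ∪ (Aπ)⁻¹` of `G` determined by `π : A* → G`. -/
def gens {A G : Type*} [Group G] (π : FreeMonoid A →* G) : Set G :=
  (Set.range fun a : A => π (FreeMonoid.of a)) ∪
    Set.range fun a : A => (π (FreeMonoid.of a))⁻¹

/-- The word metric `d_A` on `G`: the least `n` such that `g⁻¹h` is a product of `n`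
elements of `Aπ ∪ (Aπ)⁻¹`. -/
noncomputable def wdist {A G : Type*} [Group G] (π : FreeMonoid A →* G) (g h : G) : ℕ :=
  sInf {n : ℕ | ∃ l : List G, l.length = n ∧ (∀ x ∈ l, x ∈ gens π) ∧ l.prod = g⁻¹ * h}

/-- Evaluation of a word of `A*` in `G`. -/
def evalW {A G : Type*} [Group G] (π : FreeMonoid A →* G) (w : List A) : G :=
  π (FreeMonoid.ofList w)

/-- `u` and `v` `p`-fellow travel: `d_A(u^[n]π, v^[n]π) ≤ p` for all `n`. -/
def FellowTravel {A G : Type*} [Group G] (π : FreeMonoid A →* G) (p : ℝ≥0)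
    (u v : List A) : Prop :=
  ∀ n : ℕ, (wdist π (evalW π (u.take n)) (evalW π (v.take n)) : ℝ≥0) ≤ p

/-- `u` and `v` are `p`-meeting-fellow-travellers. -/
def MFT {A G : Type*} [Group G] (π : FreeMonoid A →* G) (p : ℝ≥0) (u v : List A) : Prop :=
  FellowTravel π p u v ∧ evalW π u = evalW π v

/-- A language is regular if it is accepted by a finite-state automaton. -/
def IsRegular {A : Type*} (L : Language A) : Prop :=
  ∃ (σ : Type) (_ : Fintype σ) (M : DFA A σ), M.accepts = L

/-- `L` is an automatic structure for `π`. -/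
structure IsAutomaticStructure {A G : Type*} [Group G] (π : FreeMonoid A →* G)
    (L : Language A) : Prop where
  regular : IsRegular L
  onto : ∀ g : G, ∃ w ∈ L, evalW π w = g
  ft : ∃ N : ℕ, ∀ u ∈ L, ∀ v ∈ L,
    wdist π (evalW π u) (evalW π v) ≤ 1 → FellowTravel π N u v

/-- Evaluation of an element of `A ∪ {ε}`. -/
def evalOpt {A G : Type*} [Group G] (π : FreeMonoid A →* G) : Option A → G
  | none => 1
  | some a => π (FreeMonoid.of a)

/-- `L` is a biautomatic structure for `π`. -/
structure IsBiautomaticStructure {A G : Type*} [Group G] (π : FreeMonoid A →* G)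
    (L : Language A) extends IsAutomaticStructure π L : Prop where
  bi : ∃ N : ℕ, ∀ u ∈ L, ∀ v ∈ L, ∀ a : Option A,
    evalW π v = evalOpt π a * evalW π u →
    ∀ n : ℕ, wdist π (evalOpt π a * evalW π (u.take n)) (evalW π (v.take n)) ≤ N

/-- A language is factorial if it is closed under taking factors. -/
def IsFactorial {A : Type*} (L : Language A) : Prop :=
  ∀ u ∈ L, ∀ v : List A, v <:+: u → v ∈ L

/-- `D : ℝ≥0 → ℝ≥0` is a departure function for `(G, L)`. -/
def IsDepartureFunction {A G : Type*} [Group G] (π : FreeMonoid A →* G) (L : Language A)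
    (D : ℝ≥0 → ℝ≥0) : Prop :=
  ∀ w ∈ L, ∀ r : ℝ≥0, ∀ s t : ℕ, D r ≤ (t : ℝ≥0) → s + t ≤ w.length →
    r < (wdist π (evalW π (w.take s)) (evalW π (w.take (s + t))) : ℝ≥0)

/-- Every point of `S` is within distance `N` of `T`. -/
def NbhdIn {A G : Type*} [Group G] (π : FreeMonoid A →* G) (N : ℕ) (S T : Set G) : Prop :=
  ∀ s ∈ S, ∃ t ∈ T, wdist π s t ≤ N

/-- The Hausdorff distance between `S` and `T` is at most `N`. -/
def HausdorffLE {A G : Type*} [Group G] (π : FreeMonoid A →* G) (N : ℕ)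
    (S T : Set G) : Prop :=
  NbhdIn π N S T ∧ NbhdIn π N T S

/-- `H` is an `L`-quasiconvex subgroup of `G`. -/
def IsQuasiconvex {A G : Type*} [Group G] (π : FreeMonoid A →* G) (L : Language A)
    (H : Subgroup G) : Prop :=
  ∃ k : ℕ, ∀ h ∈ H, ∀ h' ∈ H, ∀ w ∈ L, h * evalW π w = h' →
    ∀ n : ℕ, ∃ z ∈ H, wdist π (h * evalW π (w.take n)) z ≤ k

/-- The bounded reduction property for `(φ, L, L')`. -/
def BRP {A B G G' : Type*} [Group G] [Group G'] (π : FreeMonoid A →* G)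
    (π' : FreeMonoid B →* G') (φ : G →* G') (L : Language A) (L' : Language B) : Prop :=
  ∃ N : ℕ, ∀ x : G, ∀ α ∈ L, ∀ β ∈ L', evalW π' β = φ (evalW π α) →
    HausdorffLE π' N (Set.range fun n : ℕ => φ (x * evalW π (α.take n)))
      (Set.range fun n : ℕ => φ x * evalW π' (β.take n))

/-- The synchronous bounded reduction property for `(φ, L, L')`. -/
def SyncBRP {A B G G' : Type*} [Group G] [Group G'] (π : FreeMonoid A →* G)
    (π' : FreeMonoid B →* G') (φ : G →* G') (L : Language A) (L' : Language B) : Prop :=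
  ∃ N : ℕ, ∀ x : G, ∀ α ∈ L, ∀ β ∈ L', evalW π' β = φ (evalW π α) →
    ∀ n : ℕ, wdist π' (φ (x * evalW π (α.take n))) (φ x * evalW π' (β.take n)) ≤ N

/-- The fellow traveller bounded reduction property (FT-BRP) for `(φ, L, L')`. -/
def FTBRP {A B G G' : Type*} [Group G] [Group G'] (π : FreeMonoid A →* G)
    (π' : FreeMonoid B →* G') (φ : G →* G') (L : Language A) (L' : Language B) : Prop :=
  ∀ p : ℝ≥0, ∃ q : ℝ≥0,
    ∀ u₁ ∈ L, ∀ u₂ ∈ L, ∀ u₃ ∈ L, ∀ u₁' ∈ L', ∀ u₂' ∈ L', ∀ u₃' ∈ L',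
      evalW π' u₁' = φ (evalW π u₁) → evalW π' u₂' = φ (evalW π u₂) →
        evalW π' u₃' = φ (evalW π u₃) →
          MFT π p (u₁ ++ u₂) u₃ → MFT π' q (u₁' ++ u₂') u₃'

/-- The natural homomorphism `(A ⊔ B)* → G` agreeing with `π₁` on `A` and `π₂` on `B`. -/
def sumHom {A B G : Type*} [Group G] (π₁ : FreeMonoid A →* G) (π₂ : FreeMonoid B →* G) :
    FreeMonoid (A ⊕ B) →* G :=
  FreeMonoid.lift (Sum.elim (fun a => π₁ (FreeMonoid.of a)) fun b => π₂ (FreeMonoid.of b))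

/-- The union `L₁ ∪ L₂` viewed as a language over `A ⊔ B`. -/
def unionLang {A B : Type*} (L₁ : Language A) (L₂ : Language B) : Language (A ⊕ B) :=
  {w : List (A ⊕ B) | (∃ u ∈ L₁, w = u.map Sum.inl) ∨ ∃ v ∈ L₂, w = v.map Sum.inr}

/-- `L` is an asynchronous automatic structure for `π`. -/
def IsAsyncAutomaticStructure {A G : Type*} [Group G] (π : FreeMonoid A →* G)
    (L : Language A) : Prop :=
  IsRegular L ∧ (∀ g : G, ∃ w ∈ L, evalW π w = g) ∧
    ∃ p : ℕ, ∀ u ∈ L, ∀ v ∈ L, wdist π (evalW π u) (evalW π v) ≤ 1 →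
      ∃ φ ψ : ℕ → ℕ, Monotone φ ∧ Monotone ψ ∧
        Function.Surjective φ ∧ Function.Surjective ψ ∧
          ∀ t : ℕ, wdist π (evalW π (u.take (φ t))) (evalW π (v.take (ψ t))) ≤ p

/-- `L₁` and `L₂` are equivalent automatic structures. -/
def LangEquivalent {A B G : Type*} [Group G] (π₁ : FreeMonoid A →* G)
    (π₂ : FreeMonoid B →* G) (L₁ : Language A) (L₂ : Language B) : Prop :=
  IsAsyncAutomaticStructure (sumHom π₁ π₂) (unionLang L₁ L₂)

/-- `L₁` and `L₂` are synchronously equivalent automatic structures. -/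
def LangSyncEquivalent {A B G : Type*} [Group G] (π₁ : FreeMonoid A →* G)
    (π₂ : FreeMonoid B →* G) (L₁ : Language A) (L₂ : Language B) : Prop :=
  IsAutomaticStructure (sumHom π₁ π₂) (unionLang L₁ L₂)

/-- `L` has the Hausdorff closeness property. -/
def HausClose {A G : Type*} [Group G] (π : FreeMonoid A →* G) (L : Language A) : Prop :=
  ∃ N : ℕ, ∀ u ∈ L, ∀ v ∈ L, wdist π (evalW π u) (evalW π v) ≤ 1 →
    HausdorffLE π N (Set.range fun n : ℕ => evalW π (u.take n))
      (Set.range fun n : ℕ => evalW π (v.take n))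

/-- The padded alphabet `C = (A×B) ∪ (A×{$}) ∪ ({$}×B)` of convolution. -/
abbrev ConvAlphabet (A B : Type*) := (A × B) ⊕ (A ⊕ B)

/-- The convolution `u ⋄ v` of two words. -/
def conv {A B : Type*} : List A → List B → List (ConvAlphabet A B)
  | [], [] => []
  | [], b :: v => Sum.inr (Sum.inr b) :: conv [] v
  | a :: u, [] => Sum.inr (Sum.inl a) :: conv u []
  | a :: u, b :: v => Sum.inl (a, b) :: conv u v
  termination_by u v => u.length + v.length

/-- The convolution `L₁ ⋄ L₂` of two languages. -/
def convLang {A B : Type*} (L₁ : Language A) (L₂ : Language B) :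
    Language (ConvAlphabet A B) :=
  {w : List (ConvAlphabet A B) | ∃ u ∈ L₁, ∃ v ∈ L₂, w = conv u v}

/-- The natural homomorphism `C* → G × G'` for the convolution alphabet. -/
def convHom {A B G G' : Type*} [Group G] [Group G'] (π₁ : FreeMonoid A →* G)
    (π₂ : FreeMonoid B →* G') : FreeMonoid (ConvAlphabet A B) →* G × G' :=
  FreeMonoid.lift fun c =>
    match c with
    | Sum.inl (a, b) => (π₁ (FreeMonoid.of a), π₂ (FreeMonoid.of b))
    | Sum.inr (Sum.inl a) => (π₁ (FreeMonoid.of a), 1)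
    | Sum.inr (Sum.inr b) => (1, π₂ (FreeMonoid.of b))

/-- A group is automatic if it admits an automatic structure over some finite alphabet. -/
def IsAutomaticGroup (G : Type*) [Group G] : Prop :=
  ∃ (A : Type) (_ : Fintype A) (π : FreeMonoid A →* G) (L : Language A),
    IsAutomaticStructure π L

end Auto

open Auto

namespace BRPAux
open Auto

section Basic
variable {B G : Type*} [Group G] (π : FreeMonoid B →* G)

theorem evalW_append (u v : List B) : evalW π (u ++ v) = evalW π u * evalW π v := by
  simp [evalW, FreeMonoid.ofList_append]

theorem evalW_nil : evalW π ([] : List B) = 1 := by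
  simp [evalW, FreeMonoid.ofList_nil]

theorem evalW_eq_prod (w : List B) :
    evalW π w = (w.map fun b => π (FreeMonoid.of b)).prod := by
  induction w with
  | nil => simp [evalW_nil]
  | cons a l ih =>
    rw [show a :: l = [a] ++ l from rfl, evalW_append]
    simp only [List.map_append, List.prod_append, ← ih, List.map_cons, List.map_nil,
      List.prod_cons, List.prod_nil]
    congr 1
    · simp [evalW, FreeMonoid.ofList_singleton, mul_one]

theorem mem_gens_left (a : B) : π (FreeMonoid.of a) ∈ gens π := Or.inl ⟨a, rfl⟩

theorem gens_inv {x : G} (hx : x ∈ gens π) : x⁻¹ ∈ gens π := by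
  rcases hx with ⟨a, rfl⟩ | ⟨a, rfl⟩
  · exact Or.inr ⟨a, rfl⟩
  · exact Or.inl ⟨a, by simp⟩

theorem wdist_le_of_list {g h : G} (l : List G) (hmem : ∀ x ∈ l, x ∈ gens π)
    (hp : l.prod = g⁻¹ * h) : wdist π g h ≤ l.length :=
  Nat.sInf_le ⟨l, rfl, hmem, hp⟩

theorem wdist_self (g : G) : wdist π g g = 0 :=
  Nat.le_zero.mp (by simpa using wdist_le_of_list π ([] : List G) (by simp) (by simp))

theorem wdist_left (x g h : G) : wdist π (x * g) (x * h) = wdist π g h := by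
  have : (x * g)⁻¹ * (x * h) = g⁻¹ * h := by group
  unfold wdist
  rw [this]

theorem wdist_mul_right (g y : G) : wdist π g (g * y) = wdist π 1 y := by
  have := wdist_left π g 1 y
  simpa using this

theorem wdist_one_le_length (w : List B) : wdist π 1 (evalW π w) ≤ w.length := by
  have := wdist_le_of_list π (g := 1) (h := evalW π w) (w.map fun b => π (FreeMonoid.of b))
    (by rintro x hx; rcases List.mem_map.mp hx with ⟨a, _, rfl⟩; exact mem_gens_left π a)
    (by rw [← evalW_eq_prod]; simp)
  simpa using this

variable (hsurj : Function.Surjective ⇑π)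

include hsurj in
theorem wdist_spec (g h : G) : ∃ l : List G, l.length = wdist π g h ∧
    (∀ x ∈ l, x ∈ gens π) ∧ l.prod = g⁻¹ * h := by
  have hne : Set.Nonempty {n : ℕ | ∃ l : List G, l.length = n ∧
      (∀ x ∈ l, x ∈ gens π) ∧ l.prod = g⁻¹ * h} := by
    obtain ⟨w, hw⟩ := hsurj (g⁻¹ * h)
    refine ⟨_, (FreeMonoid.toList w).map fun b => π (FreeMonoid.of b), rfl, ?_, ?_⟩
    · rintro x hx; rcases List.mem_map.mp hx with ⟨a, _, rfl⟩; exact mem_gens_left π a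
    · have : evalW π (FreeMonoid.toList w) = g⁻¹ * h := by
        rw [evalW, FreeMonoid.ofList_toList, hw]
      rw [← this, evalW_eq_prod]
  exact Nat.sInf_mem hne

include hsurj in
theorem wdist_triangle (g h k : G) : wdist π g k ≤ wdist π g h + wdist π h k := by
  obtain ⟨l₁, hl₁, hm₁, hp₁⟩ := wdist_spec π hsurj g h
  obtain ⟨l₂, hl₂, hm₂, hp₂⟩ := wdist_spec π hsurj h k
  have := wdist_le_of_list π (g := g) (h := k) (l₁ ++ l₂)
    (by intro x hx; rcases List.mem_append.mp hx with h' | h'; exacts [hm₁ x h', hm₂ x h'])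
    (by rw [List.prod_append, hp₁, hp₂]; group)
  simpa [hl₁, hl₂] using this

include hsurj in
theorem wdist_comm (g h : G) : wdist π g h = wdist π h g := by
  have key : ∀ g h : G, wdist π h g ≤ wdist π g h := by
    intro g h
    obtain ⟨l, hl, hm, hp⟩ := wdist_spec π hsurj g h
    have := wdist_le_of_list π (g := h) (h := g) ((l.map fun x => x⁻¹).reverse)
      (by intro x hx
          simp only [List.mem_reverse, List.mem_map] at hx
          rcases hx with ⟨a, ha, rfl⟩
          exact gens_inv π (hm a ha))
      (by rw [← List.prod_inv_reverse, hp]; group)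
    simpa [hl] using this
  exact le_antisymm (key h g) (key g h)

include hsurj in
theorem eq_of_wdist_le_zero {g h : G} (hd : wdist π g h ≤ 0) : g = h := by
  obtain ⟨l, hl, _, hp⟩ := wdist_spec π hsurj g h
  rw [Nat.le_zero.mp hd] at hl
  rw [List.length_eq_zero_iff.mp hl] at hp
  simp only [List.prod_nil] at hp
  rw [← mul_left_cancel_iff (a := g⁻¹), ← hp, inv_mul_cancel]

include hsurj in
theorem ball_finite [Fintype B] (r : ℕ) : Set.Finite {g : G | wdist π 1 g ≤ r} := by
  have hgens : Set.Finite (gens π) := (Set.finite_range _).union (Set.finite_range _)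
  haveI := hgens.to_subtype
  have hfin : Set.Finite {l : List ↥(gens π) | l.length ≤ r} := List.finite_length_le _ r
  apply Set.Finite.subset ((hfin.image (fun l => (l.map Subtype.val).prod)))
  intro g hg
  obtain ⟨l, hl, hm, hp⟩ := wdist_spec π hsurj 1 g
  refine ⟨l.attach.map fun x => (⟨x.1, hm x.1 x.2⟩ : ↥(gens π)), by simpa [hl] using hg, ?_⟩
  show (List.map Subtype.val ((l.attach.map fun x => (⟨x.1, hm x.1 x.2⟩ : ↥(gens π))))).prod = g
  have : (List.map Subtype.val ((l.attach.map fun x => (⟨x.1, hm x.1 x.2⟩ : ↥(gens π))))) = l := by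
    simp [List.map_map]
  rw [this, hp]; group

end Basic

section Ell

variable {B G : Type*} [Group G] (π : FreeMonoid B →* G) (L : Language B)

/-- Minimal length of a representative in `L` of `g`. -/
noncomputable def ell (g : G) : ℕ :=
  sInf {k : ℕ | ∃ w, w ∈ L ∧ evalW π w = g ∧ w.length = k}

theorem ell_spec (honto : ∀ g : G, ∃ w ∈ L, evalW π w = g) (g : G) :
    ∃ w, w ∈ L ∧ evalW π w = g ∧ w.length = ell π L g := by
  have hne : Set.Nonempty {k : ℕ | ∃ w, w ∈ L ∧ evalW π w = g ∧ w.length = k} := by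
    obtain ⟨w, hw, he⟩ := honto g
    exact ⟨w.length, w, hw, he, rfl⟩
  exact Nat.sInf_mem hne

theorem ell_min {g : G} {w : List B} (hw : w ∈ L) (he : evalW π w = g) :
    ell π L g ≤ w.length :=
  Nat.sInf_le ⟨w, hw, he, rfl⟩

theorem ell_lip [Fintype B] (h₂ : IsAutomaticStructure π L) :
    ∃ c : ℕ, ∀ g h : G, wdist π g h ≤ 1 → ell π L h ≤ ell π L g + c := by
  obtain ⟨σ, iσ, M, hM⟩ := h₂.regular
  haveI := iσ
  obtain ⟨N, hN⟩ := h₂.ft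
  have hsurj : Function.Surjective ⇑π := by
    intro g
    obtain ⟨w, _, hw⟩ := h₂.onto g
    exact ⟨FreeMonoid.ofList w, hw⟩
  have hball := ball_finite π hsurj N
  set T : Finset (σ × G) := Finset.univ ×ˢ hball.toFinset with hT
  refine ⟨T.card + 1, ?_⟩
  intro g h hgh
  by_contra hcon
  push_neg at hcon
  obtain ⟨u, hu, heu, hlu⟩ := ell_spec π L h₂.onto g
  obtain ⟨v, hv, hev, hlv⟩ := ell_spec π L h₂.onto h
  have hft := hN u hu v hv (by rw [heu, hev]; exact hgh)
  set e := ell π L g with he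
  have hlt : ∀ k : Fin (T.card + 1), e + (k : ℕ) < v.length := by
    intro k
    have hk : (k : ℕ) ≤ T.card := Nat.lt_succ_iff.mp k.2
    have : e + (T.card + 1) < ell π L h := hcon
    omega
  set f : Fin (T.card + 1) → σ × G :=
    fun k => (M.evalFrom M.start (v.take (e + k)), g⁻¹ * evalW π (v.take (e + k))) with hf
  have hmaps : ∀ k ∈ (Finset.univ : Finset (Fin (T.card + 1))), f k ∈ T := by
    intro k _
    refine Finset.mem_product.mpr ⟨Finset.mem_univ _, ?_⟩
    rw [Set.Finite.mem_toFinset]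
    have h1 : wdist π (evalW π (u.take (e + k))) (evalW π (v.take (e + k))) ≤ N := by
      have := hft (e + k)
      exact_mod_cast this
    have h2 : u.take (e + k) = u := List.take_of_length_le (by omega)
    rw [h2, heu] at h1
    show wdist π 1 (g⁻¹ * evalW π (v.take (e + (k : ℕ)))) ≤ N
    rw [← wdist_left π g 1 (g⁻¹ * evalW π (v.take (e + (k : ℕ)))), mul_one,
      mul_inv_cancel_left]
    exact h1
  have hcard : T.card < Finset.univ.card (α := Fin (T.card + 1)) := by
    simp
  obtain ⟨k, _, k', _, hkk', hfeq⟩ :=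
    Finset.exists_ne_map_eq_of_card_lt_of_maps_to hcard hmaps
  have key : ∀ k k' : Fin (T.card + 1), (k : ℕ) < (k' : ℕ) → f k = f k' → False := by
    intro k k' hklt hfeq
    set i := e + (k : ℕ) with hi
    set j := e + (k' : ℕ) with hj
    have hij : i < j := by omega
    have hjv : j < v.length := hlt k'
    set v' := v.take i ++ v.drop j with hv'
    have hstate : M.evalFrom M.start (v.take i) = M.evalFrom M.start (v.take j) :=
      congrArg Prod.fst hfeq
    have hv'L : v' ∈ L := by
      rw [← hM]
      have hvM : v ∈ M.accepts := by rw [hM]; exact hv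
      rw [DFA.mem_accepts] at hvM ⊢
      show M.eval (v.take i ++ v.drop j) ∈ M.accept
      rw [DFA.eval, DFA.evalFrom_of_append, hstate, ← DFA.evalFrom_of_append,
        List.take_append_drop]
      exact hvM
    have heq' : evalW π (v.take i) = evalW π (v.take j) :=
      mul_left_cancel (congrArg Prod.snd hfeq)
    have hev' : evalW π v' = h := by
      rw [hv', evalW_append, heq', ← evalW_append, List.take_append_drop, hev]
    have hlen : v'.length < v.length := by
      rw [hv']
      rw [List.length_append, List.length_take, List.length_drop]
      omega
    have := ell_min π L hv'L hev'
    omega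
  rcases Ne.lt_or_gt hkk' with hlt' | hlt'
  · exact key k k' (by exact_mod_cast hlt') hfeq
  · exact key k' k (by exact_mod_cast hlt') hfeq.symm

theorem ell_chain [Fintype B] (hsurj : Function.Surjective ⇑π) {c : ℕ}
    (hlip : ∀ g h : G, wdist π g h ≤ 1 → ell π L h ≤ ell π L g + c) :
    ∀ (k : ℕ) (g h : G), wdist π g h ≤ k → ell π L h ≤ ell π L g + c * k := by
  intro k
  induction k with
  | zero =>
    intro g h hd
    rw [eq_of_wdist_le_zero π hsurj hd] at *
    simp
  | succ k ih =>
    intro g h hd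
    obtain ⟨l, hl, hm, hp⟩ := wdist_spec π hsurj g h
    match l, hl, hm, hp with
    | [], hl, hm, hp =>
      have : g = h := by
        simp only [List.prod_nil] at hp
        rw [← mul_left_cancel_iff (a := g⁻¹), ← hp, inv_mul_cancel]
      rw [this]
      omega
    | x :: l', hl, hm, hp =>
      have hx : x ∈ gens π := hm x List.mem_cons_self
      have h1 : wdist π g (g * x) ≤ 1 := by
        have := wdist_le_of_list π (g := g) (h := g * x) [x] (by simpa using hx)
          (by simp)
        simpa using this
      have h2 : wdist π (g * x) h ≤ k := by
        have hlen' : l'.length ≤ k := by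
          simp only [List.length_cons] at hl
          omega
        have := wdist_le_of_list π (g := g * x) (h := h) l'
          (fun y hy => hm y (List.mem_cons_of_mem x hy))
          (by
            simp only [List.prod_cons] at hp
            rw [mul_inv_rev]
            rw [mul_assoc]
            rw [← hp]
            group)
        omega
      calc ell π L h ≤ ell π L (g * x) + c * k := ih (g * x) h h2
        _ ≤ (ell π L g + c) + c * k := by
            have := hlip g (g * x) h1
            omega
        _ = ell π L g + c * (k + 1) := by ring

end Ell

end BRPAux

/-- For a factorial automatic structure `L₁` and an automatic structure `L₂`,
the FT-BRP for `(φ, L₁, L₂)` implies the BRP for `(φ, L₁, L₂)`. -/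
theorem ftbrp_implies_brp {A B G : Type*} [Fintype A] [Fintype B] [Group G]
    (π₁ : FreeMonoid A →* G) (π₂ : FreeMonoid B →* G)
    (L₁ : Language A) (L₂ : Language B)
    (h₁ : IsAutomaticStructure π₁ L₁) (hfac : IsFactorial L₁)
    (h₂ : IsAutomaticStructure π₂ L₂)
    (φ : G →* G) (hft : FTBRP π₁ π₂ φ L₁ L₂) :
    BRP π₁ π₂ φ L₁ L₂ := by
  classical
  obtain ⟨q, hq⟩ := hft 0
  have hsurj : Function.Surjective ⇑π₂ := by
    intro g; obtain ⟨w, _, hw⟩ := h₂.onto g; exact ⟨FreeMonoid.ofList w, hw⟩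
  obtain ⟨c, hc⟩ := BRPAux.ell_lip π₂ L₂ h₂
  choose rep hrepL hrepE hrepLen using BRPAux.ell_spec π₂ L₂ h₂.onto
  set q' : ℕ := ⌈q⌉₊ with hq'def
  set C : ℕ := Finset.univ.sup (fun a : A => wdist π₂ 1 (φ (π₁ (FreeMonoid.of a)))) with hCdef
  set ℓ1 : ℕ := BRPAux.ell π₂ L₂ 1 with hl1def
  refine ⟨q' + c * C + ℓ1, ?_⟩
  intro x α hα β hβ hbeq
  set P : ℕ → G := fun n => φ (evalW π₁ (α.take n)) with hP
  set Q : ℕ → G := fun m => evalW π₂ (β.take m) with hQ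
  set γ : ℕ → List B := fun n => rep (P n) with hγ
  set δ : ℕ → List B := fun n => rep (φ (evalW π₁ (α.drop n))) with hδ
  have hγL : ∀ n, γ n ∈ L₂ := fun n => hrepL _
  have hγE : ∀ n, evalW π₂ (γ n) = P n := fun n => hrepE _
  have hγlen : ∀ n, (γ n).length = BRPAux.ell π₂ L₂ (P n) := fun n => hrepLen _
  have hδL : ∀ n, δ n ∈ L₂ := fun n => hrepL _
  have hδE : ∀ n, evalW π₂ (δ n) = φ (evalW π₁ (α.drop n)) := fun n => hrepE _
  have hδlen : ∀ n, (δ n).length = BRPAux.ell π₂ L₂ (φ (evalW π₁ (α.drop n))) :=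
    fun n => hrepLen _
  have hP0 : P 0 = 1 := by
    simp only [hP, List.take_zero, BRPAux.evalW_nil, map_one]
  have hMFT : ∀ n : ℕ, MFT π₂ q (γ n ++ δ n) β := by
    intro n
    refine hq (α.take n) (hfac α hα _ (List.take_prefix n α).isInfix)
      (α.drop n) (hfac α hα _ (List.drop_suffix n α).isInfix)
      α hα (γ n) (hγL n) (δ n) (hδL n) β hβ (hγE n) (hδE n) hbeq ?_
    constructor
    · intro k
      rw [List.take_append_drop]
      simp [BRPAux.wdist_self]
    · rw [List.take_append_drop]
  have hFT : ∀ n m : ℕ, wdist π₂ (evalW π₂ ((γ n ++ δ n).take m)) (Q m) ≤ q' := by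
    intro n m
    have h1 := (hMFT n).1 m
    have h2 : (wdist π₂ (evalW π₂ ((γ n ++ δ n).take m)) (evalW π₂ (β.take m)) : ℝ≥0)
        ≤ (q' : ℝ≥0) := le_trans h1 (Nat.le_ceil q)
    exact_mod_cast h2
  have hPC : ∀ n : ℕ, wdist π₂ (P n) (P (n + 1)) ≤ C := by
    intro n
    by_cases hn : α.length ≤ n
    · have h0 : P (n + 1) = P n := by
        simp only [hP]
        rw [List.take_of_length_le hn, List.take_of_length_le (by omega)]
      rw [h0, BRPAux.wdist_self]
      exact Nat.zero_le _
    · push_neg at hn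
      have hsucc : α.take (n + 1) = α.take n ++ [α.get ⟨n, hn⟩] := by
        rw [List.take_succ]
        congr 1
        rw [List.getElem?_eq_getElem hn]
        rfl
      have : P (n + 1) = P n * φ (π₁ (FreeMonoid.of (α.get ⟨n, hn⟩))) := by
        simp only [hP, hsucc, BRPAux.evalW_append, map_mul]
        congr 2
      rw [this]
      rw [BRPAux.wdist_mul_right, hCdef]
      exact Finset.le_sup (f := fun a : A => wdist π₂ 1 (φ (π₁ (FreeMonoid.of a))))
        (Finset.mem_univ (α.get ⟨n, hn⟩))
  have hγsucc : ∀ n, (γ (n + 1)).length ≤ (γ n).length + c * C := by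
    intro n
    rw [hγlen, hγlen]
    exact BRPAux.ell_chain π₂ L₂ hsurj hc C (P n) (P (n + 1)) (hPC n)
  constructor
  · rintro s ⟨n, rfl⟩
    refine ⟨φ x * evalW π₂ (β.take ((γ n).length)), ⟨(γ n).length, rfl⟩, ?_⟩
    simp only [map_mul, BRPAux.wdist_left]
    have h3 : (γ n ++ δ n).take (γ n).length = γ n := List.take_left
    have h4 : wdist π₂ (P n) (Q ((γ n).length)) ≤ q' := by
      have := hFT n ((γ n).length)
      rwa [h3, hγE] at this
    have h5 : wdist π₂ (φ (evalW π₁ (α.take n))) (evalW π₂ (β.take ((γ n).length)))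
        = wdist π₂ (P n) (Q ((γ n).length)) := rfl
    omega
  · rintro s ⟨m, rfl⟩
    by_cases hm : m < (γ 0).length
    · refine ⟨φ (x * evalW π₁ (α.take 0)), ⟨0, rfl⟩, ?_⟩
      rw [map_mul, BRPAux.wdist_left]
      have hQ1 : wdist π₂ 1 (Q m) ≤ m :=
        le_trans (BRPAux.wdist_one_le_length π₂ (β.take m)) (by simp)
      have h5 : wdist π₂ (evalW π₂ (β.take m)) (φ (evalW π₁ (α.take 0)))
          = wdist π₂ (Q m) (P 0) := rfl
      rw [h5, hP0, BRPAux.wdist_comm π₂ hsurj (Q m) 1]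
      have h6 : (γ 0).length = ℓ1 := by rw [hγlen, hP0]
      omega
    · push_neg at hm
      set T : Finset ℕ := (Finset.range (α.length + 1)).filter
        (fun n => (γ n).length ≤ m) with hT
      have h0T : 0 ∈ T := by
        rw [hT, Finset.mem_filter, Finset.mem_range]
        exact ⟨by omega, hm⟩
      set n₀ := T.max' ⟨0, h0T⟩ with hn₀
      have hn₀T : n₀ ∈ T := T.max'_mem _
      rw [hT, Finset.mem_filter, Finset.mem_range] at hn₀T
      obtain ⟨hn₀le, hγn₀⟩ := hn₀T
      have hJ : min (m - (γ n₀).length) ((δ n₀).length) ≤ c * C + ℓ1 := by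
        by_cases hend : n₀ = α.length
        · have : (δ n₀).length = ℓ1 := by
            rw [hδlen, hend, List.drop_length, BRPAux.evalW_nil, map_one]
          have := min_le_right (m - (γ n₀).length) ((δ n₀).length)
          omega
        · have hlt' : n₀ < α.length := by omega
          have hnot : n₀ + 1 ∉ T := by
            intro hmem
            have := T.le_max' _ hmem
            omega
          have : ¬ ((γ (n₀ + 1)).length ≤ m) := by
            intro hcontra
            exact hnot (by rw [hT, Finset.mem_filter, Finset.mem_range]; exact ⟨by omega, hcontra⟩)
          have h9 := hγsucc n₀
          have h10 := min_le_left (m - (γ n₀).length) ((δ n₀).length)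
          omega
      have hsplit : (γ n₀ ++ δ n₀).take m = γ n₀ ++ (δ n₀).take (m - (γ n₀).length) := by
        rw [List.take_append, List.take_of_length_le hγn₀]
      have hXP : wdist π₂ (evalW π₂ ((γ n₀ ++ δ n₀).take m)) (P n₀) ≤ c * C + ℓ1 := by
        rw [hsplit, BRPAux.evalW_append, hγE]
        have h11 : wdist π₂ (P n₀ * evalW π₂ ((δ n₀).take (m - (γ n₀).length))) (P n₀)
            = wdist π₂ 1 (evalW π₂ ((δ n₀).take (m - (γ n₀).length))) := by
          rw [BRPAux.wdist_comm π₂ hsurj, BRPAux.wdist_mul_right]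
        rw [h11]
        have h12 := BRPAux.wdist_one_le_length π₂ ((δ n₀).take (m - (γ n₀).length))
        have h13 : ((δ n₀).take (m - (γ n₀).length)).length
            = min (m - (γ n₀).length) ((δ n₀).length) := List.length_take
        omega
      refine ⟨φ (x * evalW π₁ (α.take n₀)), ⟨n₀, rfl⟩, ?_⟩
      simp only [map_mul, BRPAux.wdist_left]
      have htri := BRPAux.wdist_triangle π₂ hsurj (Q m)
        (evalW π₂ ((γ n₀ ++ δ n₀).take m)) (P n₀)
      have h7 : wdist π₂ (Q m) (evalW π₂ ((γ n₀ ++ δ n₀).take m)) ≤ q' := by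
        rw [BRPAux.wdist_comm π₂ hsurj]
        exact hFT n₀ m
      have h14 : wdist π₂ (evalW π₂ (β.take m)) (φ (evalW π₁ (α.take n₀)))
          = wdist π₂ (Q m) (P n₀) := rfl
      omega
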